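/- Fix η ∈ (0,1), ξ₁, ξ₂ ∈ ℝ⁴ with |ξ₁ − ξ₂| ≥ 2η, and a bounded measurable Ω ⊂ ℝ⁴. Suppose v₁, v₂ : Ω → ℝ satisfy |v_i(x)| ≤ C(δ_i³/((δ_i²+|x−ξ_i|²)|x−ξ_i|²) + λ^{1/4} δ_i e^{−λ|x−ξ_i|}/|x−ξ_i|^{3/2}) for x outside B_{η/2}(ξ_i), and |v_i| ≤ C U_{δ_i,ξ_i} everywhere, where U_{δ,ξ}(x) = 2√2 δ/(δ²+|x−ξ|²). Then ∫_Ω v₁² v₂² ≤ C' δ₁² δ₂² |ln(δ₁δ₂)| for all sufficiently small δ₁, δ₂ > 0. -/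

import Mathlib

noncomputable section
open MeasureTheory Set Metric

abbrev E4 := EuclideanSpace ℝ (Fin 4)

def bubble (δ : ℝ) (ξ : E4) (x : E4) : ℝ :=
  (2 * Real.sqrt 2) * δ / (δ^2 + ‖x - ξ‖^2)

lemma bubble_sq {δ : ℝ} (ξ x : E4) :
    (bubble δ ξ x)^2 = 8 * δ^2 / (δ^2 + ‖x - ξ‖^2)^2 := by
  unfold bubble
  rw [div_pow]
  congr 1
  have : (Real.sqrt 2)^2 = 2 := Real.sq_sqrt (by norm_num)
  ring_nf
  nlinarith [this]

lemma ftc_step (δ R : ℝ) (hδ : 0 < δ) :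
    ∫ y in (0:ℝ)..R, y / (δ^2 + y^2) =
      (1/2) * Real.log (δ^2 + R^2) - (1/2) * Real.log (δ^2 + 0^2) := by
  have h : ∀ y ∈ Set.uIcc (0:ℝ) R, HasDerivAt (fun y => (1/2) * Real.log (δ^2 + y^2))
      (y / (δ^2 + y^2)) y := by
    intro y _
    have h0 : (0:ℝ) < δ^2 + y^2 := by positivity
    have h1 : HasDerivAt (fun y : ℝ => δ^2 + y^2) (2*y) y := by
      simpa using ((hasDerivAt_pow 2 y).const_add (δ^2))
    have h2 := (Real.hasDerivAt_log h0.ne').comp y h1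
    have h3 := h2.const_mul (1/2 : ℝ)
    rw [show y / (δ^2 + y^2) = 1/2 * ((δ^2 + y^2)⁻¹ * (2*y)) by ring]
    exact h3
  have hint : IntervalIntegrable (fun y : ℝ => y / (δ^2 + y^2)) volume 0 R := by
    apply Continuous.intervalIntegrable
    apply Continuous.div continuous_id (by fun_prop)
    intro y; positivity
  simpa using intervalIntegral.integral_eq_sub_of_hasDerivAt h hint

lemma bubble_sq_integral (R : ℝ) (hR : 1 ≤ R) :
    ∃ K > 0, ∀ (δ : ℝ) (ξ : E4), 0 < δ → δ < 1 →
      ∫ x in ball ξ R, (bubble δ ξ x)^2 ≤ K * δ^2 * (1 + |Real.log δ|) := by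
  set M : ℝ := max 1 ((1/2) * Real.log (2 * R^2)) with hM
  have hMpos : 0 < M := lt_of_lt_of_le one_pos (le_max_left _ _)
  set V : ℝ := (volume (ball (0:E4) 1)).toReal with hV
  have hVpos : 0 < V := by
    rw [hV]
    exact ENNReal.toReal_pos (measure_ball_pos _ _ one_pos).ne' measure_ball_lt_top.ne
  refine ⟨32 * V * M, by positivity, ?_⟩
  intro δ ξ hδ hδ1
  set f : ℝ → ℝ := fun r => Set.indicator (Set.Iio R) (fun r => 8 * δ^2 / (δ^2 + r^2)^2) r
    with hf
  have step1 : ∫ x in ball ξ R, (bubble δ ξ x)^2 = ∫ x : E4, f ‖x - ξ‖ := by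
    rw [← integral_indicator measurableSet_ball]
    congr 1
    funext x
    by_cases hx : x ∈ ball ξ R
    · rw [Set.indicator_of_mem hx]
      have hmem : ‖x - ξ‖ ∈ Set.Iio R := by simpa [mem_ball, dist_eq_norm] using hx
      simp only [hf, Set.indicator_of_mem hmem]
      exact bubble_sq ξ x
    · rw [Set.indicator_of_notMem hx]
      have hmem : ‖x - ξ‖ ∉ Set.Iio R := by
        simp only [Set.mem_Iio, not_lt]
        simpa [mem_ball, dist_eq_norm, not_lt] using hx
      simp only [hf, Set.indicator_of_notMem hmem]
  have step2 : ∫ x : E4, f ‖x - ξ‖ = ∫ x : E4, f ‖x‖ :=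
    integral_sub_right_eq_self (fun x => f ‖x‖) ξ
  have step3 : ∫ x : E4, f ‖x‖ = 4 • V • ∫ y in Ioi (0:ℝ), y ^ 3 • f y := by
    have := MeasureTheory.integral_fun_norm_addHaar (volume : Measure E4) f
    simpa [hV, Measure.real] using this
  have step4 : ∫ y in Ioi (0:ℝ), y ^ 3 • f y
      = ∫ y in Ioo (0:ℝ) R, y ^ 3 * (8 * δ^2 / (δ^2 + y^2)^2) := by
    have : ∀ y : ℝ, y ^ 3 • f y
        = Set.indicator (Set.Iio R) (fun y => y ^ 3 * (8 * δ^2 / (δ^2 + y^2)^2)) y := by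
      intro y
      by_cases hy : y ∈ Set.Iio R <;>
        simp [hf, Set.indicator_of_mem, Set.indicator_of_notMem, hy]
    simp_rw [this]
    rw [setIntegral_indicator measurableSet_Iio, Set.Ioi_inter_Iio]
  have step5 : ∫ y in Ioo (0:ℝ) R, y ^ 3 * (8 * δ^2 / (δ^2 + y^2)^2)
      ≤ ∫ y in Ioo (0:ℝ) R, 8 * δ^2 * (y / (δ^2 + y^2)) := by
    apply setIntegral_mono_on
    · refine (Continuous.integrableOn_Icc (a := 0) (b := R) ?_).mono_set Ioo_subset_Icc_self
      apply Continuous.mul (by fun_prop)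
      apply Continuous.div continuous_const (by fun_prop)
      intro y; positivity
    · refine (Continuous.integrableOn_Icc (a := 0) (b := R) ?_).mono_set Ioo_subset_Icc_self
      apply Continuous.mul continuous_const
      apply Continuous.div continuous_id (by fun_prop)
      intro y; positivity
    · exact measurableSet_Ioo
    · intro y hy
      have hy0 : 0 < y := hy.1
      have hpos : (0:ℝ) < δ^2 + y^2 := by positivity
      have : y ^ 3 ≤ y * (δ^2 + y^2) := by nlinarith
      rw [show y^3 * (8 * δ^2 / (δ^2 + y^2)^2) = (8 * δ^2 * y^3)/(δ^2 + y^2)^2 by ring,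
        show 8 * δ^2 * (y / (δ^2 + y^2)) = (8 * δ^2 * y)/(δ^2 + y^2) by ring,
        div_le_div_iff₀ (by positivity) (by positivity)]
      nlinarith [mul_le_mul_of_nonneg_left this
        (by positivity : (0:ℝ) ≤ 8 * δ^2 * (δ^2 + y^2))]
  have step6 : ∫ y in Ioo (0:ℝ) R, 8 * δ^2 * (y / (δ^2 + y^2))
      = 8 * δ^2 * ((1/2) * Real.log (δ^2 + R^2) - (1/2) * Real.log (δ^2)) := by
    rw [← MeasureTheory.integral_Ioc_eq_integral_Ioo,
      ← intervalIntegral.integral_of_le (le_trans zero_le_one hR),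
      intervalIntegral.integral_const_mul, ftc_step δ R hδ]
    norm_num
  have step7 : (1/2) * Real.log (δ^2 + R^2) - (1/2) * Real.log (δ^2)
      ≤ M * (1 + |Real.log δ|) := by
    have hlog1 : Real.log (δ^2 + R^2) ≤ Real.log (2 * R^2) := by
      apply Real.log_le_log (by positivity)
      nlinarith
    have hlog2 : Real.log (δ^2) = 2 * Real.log δ := by
      rw [Real.log_pow]; push_cast; ring
    have hlogneg : Real.log δ < 0 := Real.log_neg hδ hδ1
    have habs : |Real.log δ| = -Real.log δ := abs_of_neg hlogneg
    have h1 : (1/2) * Real.log (2 * R^2) ≤ M := le_max_right _ _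
    have h2 : (1:ℝ) ≤ M := le_max_left _ _
    nlinarith [abs_nonneg (Real.log δ)]
  rw [step1, step2, step3, step4]
  rw [nsmul_eq_mul, smul_eq_mul]
  have hnn : 0 ≤ ∫ y in Ioo (0:ℝ) R, y ^ 3 * (8 * δ^2 / (δ^2 + y^2)^2) := by
    apply setIntegral_nonneg measurableSet_Ioo
    intro y hy
    have : 0 < y := hy.1
    positivity
  calc (4:ℝ) * (V * ∫ y in Ioo (0:ℝ) R, y ^ 3 * (8 * δ^2 / (δ^2 + y^2)^2))
      ≤ 4 * (V * (8 * δ^2 * ((1/2) * Real.log (δ^2 + R^2) - (1/2) * Real.log (δ^2)))) := by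
        have := le_trans step5 (le_of_eq step6)
        nlinarith [this, hVpos.le]
    _ ≤ 4 * (V * (8 * δ^2 * (M * (1 + |Real.log δ|)))) := by
        have h8 : (0:ℝ) ≤ 8 * δ^2 := by positivity
        nlinarith [step7, hVpos.le, mul_le_mul_of_nonneg_left step7 h8]
    _ = 32 * V * M * δ^2 * (1 + |Real.log δ|) := by ring

lemma cont_sq {δ : ℝ} (hδ : 0 < δ) (ξ : E4) : Continuous (fun x => (bubble δ ξ x)^2) := by
  apply Continuous.pow
  unfold bubble
  apply Continuous.div continuous_const (by fun_prop)
  intro x; positivity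

lemma integrableOn_of_bounded_cont {g : E4 → ℝ} (hg : Continuous g)
    {s : Set E4} (hs : Bornology.IsBounded s) (c : E4) : IntegrableOn g s := by
  obtain ⟨r, hr⟩ := hs.subset_closedBall c
  exact (hg.continuousOn.integrableOn_compact (isCompact_closedBall c r)).mono_set hr

theorem interaction_estimate (η : ℝ) (hη : η ∈ Set.Ioo (0:ℝ) 1)
    (ξ₁ ξ₂ : E4) (hsep : 2 * η ≤ ‖ξ₁ - ξ₂‖)
    (Ω : Set E4) (hΩm : MeasurableSet Ω) (hΩb : Bornology.IsBounded Ω)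
    (C : ℝ) (hC : 0 < C) :
    ∃ C' > 0, ∃ δ₀ > 0, ∀ δ₁ δ₂ : ℝ, 0 < δ₁ → δ₁ < δ₀ → 0 < δ₂ → δ₂ < δ₀ →
      ∀ lam : ℝ, 0 < lam → ∀ v₁ v₂ : E4 → ℝ,
      Measurable v₁ → Measurable v₂ →
      (∀ x ∈ Ω \ Metric.ball ξ₁ (η/2),
        |v₁ x| ≤ C * (δ₁^3 / ((δ₁^2 + ‖x - ξ₁‖^2) * ‖x - ξ₁‖^2)
          + lam ^ ((1:ℝ)/4) * δ₁ * Real.exp (-lam * ‖x - ξ₁‖) / ‖x - ξ₁‖ ^ ((3:ℝ)/2))) →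
      (∀ x ∈ Ω \ Metric.ball ξ₂ (η/2),
        |v₂ x| ≤ C * (δ₂^3 / ((δ₂^2 + ‖x - ξ₂‖^2) * ‖x - ξ₂‖^2)
          + lam ^ ((1:ℝ)/4) * δ₂ * Real.exp (-lam * ‖x - ξ₂‖) / ‖x - ξ₂‖ ^ ((3:ℝ)/2))) →
      (∀ x ∈ Ω, |v₁ x| ≤ C * bubble δ₁ ξ₁ x) →
      (∀ x ∈ Ω, |v₂ x| ≤ C * bubble δ₂ ξ₂ x) →
      (∫ x in Ω, (v₁ x)^2 * (v₂ x)^2)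
        ≤ C' * δ₁^2 * δ₂^2 * |Real.log (δ₁ * δ₂)| := by
  obtain ⟨hη0, hη1⟩ := hη
  obtain ⟨r₂, hr₂⟩ := hΩb.subset_closedBall ξ₂
  obtain ⟨r₁, hr₁⟩ := hΩb.subset_closedBall ξ₁
  set R : ℝ := max 1 (max r₁ r₂) + 1 with hRdef
  have hR1 : 1 ≤ R := by
    have := le_max_left 1 (max r₁ r₂); simp only [hRdef]; linarith
  have hsub1 : Ω ⊆ ball ξ₁ R := fun x hx => by
    have h := hr₁ hx
    rw [Metric.mem_closedBall] at h
    rw [Metric.mem_ball]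
    have : r₁ ≤ max 1 (max r₁ r₂) := le_trans (le_max_left _ _) (le_max_right _ _)
    linarith
  have hsub2 : Ω ⊆ ball ξ₂ R := fun x hx => by
    have h := hr₂ hx
    rw [Metric.mem_closedBall] at h
    rw [Metric.mem_ball]
    have : r₂ ≤ max 1 (max r₁ r₂) := le_trans (le_max_right _ _) (le_max_right _ _)
    linarith
  obtain ⟨K, hK, hKey⟩ := bubble_sq_integral R hR1
  refine ⟨C^4 * 8 / η^4 * K * 2, by positivity, Real.exp (-1), Real.exp_pos _, ?_⟩
  intro δ₁ δ₂ hδ₁ hδ₁' hδ₂ hδ₂' lam hlam v₁ v₂ hm₁ hm₂ _ _ hb₁ hb₂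
  have hδ₁1 : δ₁ < 1 := lt_trans hδ₁' (by
    calc Real.exp (-1) < Real.exp 0 := Real.exp_lt_exp.mpr (by norm_num)
      _ = 1 := Real.exp_zero)
  have hδ₂1 : δ₂ < 1 := lt_trans hδ₂' (by
    calc Real.exp (-1) < Real.exp 0 := Real.exp_lt_exp.mpr (by norm_num)
      _ = 1 := Real.exp_zero)
  have hlog₁ : 1 ≤ |Real.log δ₁| := by
    rw [abs_of_neg (Real.log_neg hδ₁ hδ₁1)]
    have := Real.log_lt_log hδ₁ hδ₁'
    rw [Real.log_exp] at this; linarith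
  have hlog₂ : 1 ≤ |Real.log δ₂| := by
    rw [abs_of_neg (Real.log_neg hδ₂ hδ₂1)]
    have := Real.log_lt_log hδ₂ hδ₂'
    rw [Real.log_exp] at this; linarith
  have hlogmul : |Real.log (δ₁ * δ₂)| = |Real.log δ₁| + |Real.log δ₂| := by
    rw [Real.log_mul hδ₁.ne' hδ₂.ne',
      abs_of_neg (by nlinarith [Real.log_neg hδ₁ hδ₁1, Real.log_neg hδ₂ hδ₂1]),
      abs_of_neg (Real.log_neg hδ₁ hδ₁1), abs_of_neg (Real.log_neg hδ₂ hδ₂1)]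
    ring
  -- dominating function
  set G : E4 → ℝ := fun x => C^4 * ((bubble δ₁ ξ₁ x)^2 * (bubble δ₂ ξ₂ x)^2) with hGdef
  have hGcont : Continuous G := by
    apply continuous_const.mul ((cont_sq hδ₁ ξ₁).mul (cont_sq hδ₂ ξ₂))
  have hGint : IntegrableOn G Ω := integrableOn_of_bounded_cont hGcont hΩb ξ₁
  have hb1nn : ∀ x, 0 ≤ bubble δ₁ ξ₁ x := fun x => by unfold bubble; positivity
  have hb2nn : ∀ x, 0 ≤ bubble δ₂ ξ₂ x := fun x => by unfold bubble; positivity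
  have hptwise : ∀ x ∈ Ω, (v₁ x)^2 * (v₂ x)^2 ≤ G x := by
    intro x hx
    have h1 : (v₁ x)^2 ≤ C^2 * (bubble δ₁ ξ₁ x)^2 := by
      rw [← sq_abs]
      calc |v₁ x|^2 ≤ (C * bubble δ₁ ξ₁ x)^2 :=
        pow_le_pow_left₀ (abs_nonneg _) (hb₁ x hx) 2
        _ = C^2 * (bubble δ₁ ξ₁ x)^2 := by ring
    have h2 : (v₂ x)^2 ≤ C^2 * (bubble δ₂ ξ₂ x)^2 := by
      rw [← sq_abs]
      calc |v₂ x|^2 ≤ (C * bubble δ₂ ξ₂ x)^2 :=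
        pow_le_pow_left₀ (abs_nonneg _) (hb₂ x hx) 2
        _ = C^2 * (bubble δ₂ ξ₂ x)^2 := by ring
    calc (v₁ x)^2 * (v₂ x)^2 ≤ (C^2 * (bubble δ₁ ξ₁ x)^2) * (C^2 * (bubble δ₂ ξ₂ x)^2) :=
      mul_le_mul h1 h2 (sq_nonneg _) (by positivity)
      _ = G x := by rw [hGdef]; ring
  have hvint : IntegrableOn (fun x => (v₁ x)^2 * (v₂ x)^2) Ω := by
    apply Integrable.mono hGint ((((hm₁.pow_const 2).mul (hm₂.pow_const 2))).aestronglyMeasurable)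
    rw [ae_restrict_iff' hΩm]
    filter_upwards with x hx
    rw [Real.norm_eq_abs, Real.norm_eq_abs, abs_of_nonneg (a := ((fun x => v₁ x ^ 2) * fun x => v₂ x ^ 2) x)
        (by simp only [Pi.mul_apply]; positivity),
      abs_of_nonneg (a := G x) (by rw [hGdef]; positivity)]
    exact hptwise x hx
  have hmono : (∫ x in Ω, (v₁ x)^2 * (v₂ x)^2) ≤ ∫ x in Ω, G x :=
    setIntegral_mono_on hvint hGint hΩm hptwise
  -- split
  have hsplit : (∫ x in Ω, G x)
      = (∫ x in Ω ∩ ball ξ₁ η, G x) + ∫ x in Ω \ ball ξ₁ η, G x :=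
    (integral_inter_add_diff measurableSet_ball hGint).symm
  -- region 1 : outside ball ξ₁ η
  have hball2int : IntegrableOn (fun x => C^4 * (8 * δ₁^2 / η^4) * (bubble δ₂ ξ₂ x)^2)
      (ball ξ₂ R) := integrableOn_of_bounded_cont (continuous_const.mul (cont_sq hδ₂ ξ₂))
      isBounded_ball ξ₂
  have hball1int : IntegrableOn (fun x => C^4 * (8 * δ₂^2 / η^4) * (bubble δ₁ ξ₁ x)^2)
      (ball ξ₁ R) := integrableOn_of_bounded_cont (continuous_const.mul (cont_sq hδ₁ ξ₁))
      isBounded_ball ξ₁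
  have hreg1 : (∫ x in Ω \ ball ξ₁ η, G x)
      ≤ C^4 * (8 * δ₁^2 / η^4) * (K * δ₂^2 * (1 + |Real.log δ₂|)) := by
    have hpt : ∀ x ∈ Ω \ ball ξ₁ η, G x ≤ C^4 * (8 * δ₁^2 / η^4) * (bubble δ₂ ξ₂ x)^2 := by
      intro x hx
      have hd : η ≤ ‖x - ξ₁‖ := by
        have := hx.2
        rw [Metric.mem_ball, not_lt, dist_eq_norm] at this
        exact this
      have hb : (bubble δ₁ ξ₁ x)^2 ≤ 8 * δ₁^2 / η^4 := by
        rw [bubble_sq]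
        apply div_le_div_of_nonneg_left (by positivity) (by positivity)
        calc η^4 = (η^2)^2 := by ring
          _ ≤ (δ₁^2 + ‖x - ξ₁‖^2)^2 := by
            apply pow_le_pow_left₀ (by positivity)
            nlinarith [sq_nonneg δ₁]
      calc G x = (bubble δ₁ ξ₁ x)^2 * (C^4 * (bubble δ₂ ξ₂ x)^2) := by rw [hGdef]; ring
        _ ≤ (8 * δ₁^2 / η^4) * (C^4 * (bubble δ₂ ξ₂ x)^2) :=
          mul_le_mul_of_nonneg_right hb (by positivity)
        _ = C^4 * (8 * δ₁^2 / η^4) * (bubble δ₂ ξ₂ x)^2 := by ring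
    calc (∫ x in Ω \ ball ξ₁ η, G x)
        ≤ ∫ x in Ω \ ball ξ₁ η, C^4 * (8 * δ₁^2 / η^4) * (bubble δ₂ ξ₂ x)^2 :=
          setIntegral_mono_on (hGint.mono_set diff_subset)
            (hball2int.mono_set (diff_subset.trans hsub2)) (hΩm.diff measurableSet_ball) hpt
      _ ≤ ∫ x in ball ξ₂ R, C^4 * (8 * δ₁^2 / η^4) * (bubble δ₂ ξ₂ x)^2 := by
          apply setIntegral_mono_set hball2int
          · filter_upwards with x; positivity
          · exact HasSubset.Subset.eventuallyLE (diff_subset.trans hsub2)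
      _ = C^4 * (8 * δ₁^2 / η^4) * ∫ x in ball ξ₂ R, (bubble δ₂ ξ₂ x)^2 :=
          MeasureTheory.integral_const_mul _ _
      _ ≤ C^4 * (8 * δ₁^2 / η^4) * (K * δ₂^2 * (1 + |Real.log δ₂|)) :=
          mul_le_mul_of_nonneg_left (hKey δ₂ ξ₂ hδ₂ hδ₂1) (by positivity)
  -- region 2 : inside ball ξ₁ η, hence outside ball ξ₂ η
  have hreg2 : (∫ x in Ω ∩ ball ξ₁ η, G x)
      ≤ C^4 * (8 * δ₂^2 / η^4) * (K * δ₁^2 * (1 + |Real.log δ₁|)) := by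
    have hpt : ∀ x ∈ Ω ∩ ball ξ₁ η, G x ≤ C^4 * (8 * δ₂^2 / η^4) * (bubble δ₁ ξ₁ x)^2 := by
      intro x hx
      have hd : η ≤ ‖x - ξ₂‖ := by
        have h1 : ‖x - ξ₁‖ < η := by
          have := hx.2; rw [Metric.mem_ball, dist_eq_norm] at this; exact this
        have htri : ‖ξ₁ - ξ₂‖ ≤ ‖ξ₁ - x‖ + ‖x - ξ₂‖ := by
          calc ‖ξ₁ - ξ₂‖ = ‖(ξ₁ - x) + (x - ξ₂)‖ := by abel_nf
            _ ≤ ‖ξ₁ - x‖ + ‖x - ξ₂‖ := norm_add_le _ _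
        rw [norm_sub_rev ξ₁ x] at htri
        linarith
      have hb : (bubble δ₂ ξ₂ x)^2 ≤ 8 * δ₂^2 / η^4 := by
        rw [bubble_sq]
        apply div_le_div_of_nonneg_left (by positivity) (by positivity)
        calc η^4 = (η^2)^2 := by ring
          _ ≤ (δ₂^2 + ‖x - ξ₂‖^2)^2 := by
            apply pow_le_pow_left₀ (by positivity)
            nlinarith [sq_nonneg δ₂]
      calc G x = (bubble δ₂ ξ₂ x)^2 * (C^4 * (bubble δ₁ ξ₁ x)^2) := by rw [hGdef]; ring
        _ ≤ (8 * δ₂^2 / η^4) * (C^4 * (bubble δ₁ ξ₁ x)^2) :=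
          mul_le_mul_of_nonneg_right hb (by positivity)
        _ = C^4 * (8 * δ₂^2 / η^4) * (bubble δ₁ ξ₁ x)^2 := by ring
    calc (∫ x in Ω ∩ ball ξ₁ η, G x)
        ≤ ∫ x in Ω ∩ ball ξ₁ η, C^4 * (8 * δ₂^2 / η^4) * (bubble δ₁ ξ₁ x)^2 :=
          setIntegral_mono_on (hGint.mono_set inter_subset_left)
            (hball1int.mono_set (inter_subset_left.trans hsub1))
            (hΩm.inter measurableSet_ball) hpt
      _ ≤ ∫ x in ball ξ₁ R, C^4 * (8 * δ₂^2 / η^4) * (bubble δ₁ ξ₁ x)^2 := by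
          apply setIntegral_mono_set hball1int
          · filter_upwards with x; positivity
          · exact HasSubset.Subset.eventuallyLE (inter_subset_left.trans hsub1)
      _ = C^4 * (8 * δ₂^2 / η^4) * ∫ x in ball ξ₁ R, (bubble δ₁ ξ₁ x)^2 :=
          MeasureTheory.integral_const_mul _ _
      _ ≤ C^4 * (8 * δ₂^2 / η^4) * (K * δ₁^2 * (1 + |Real.log δ₁|)) :=
          mul_le_mul_of_nonneg_left (hKey δ₁ ξ₁ hδ₁ hδ₁1) (by positivity)
  -- combine
  have hfinal1 : 1 + |Real.log δ₁| ≤ |Real.log (δ₁ * δ₂)| := by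
    rw [hlogmul]; linarith
  have hfinal2 : 1 + |Real.log δ₂| ≤ |Real.log (δ₁ * δ₂)| := by
    rw [hlogmul]; linarith
  have hKnn : (0:ℝ) ≤ K := hK.le
  calc (∫ x in Ω, (v₁ x)^2 * (v₂ x)^2) ≤ ∫ x in Ω, G x := hmono
    _ = (∫ x in Ω ∩ ball ξ₁ η, G x) + ∫ x in Ω \ ball ξ₁ η, G x := hsplit
    _ ≤ C^4 * (8 * δ₂^2 / η^4) * (K * δ₁^2 * (1 + |Real.log δ₁|))
        + C^4 * (8 * δ₁^2 / η^4) * (K * δ₂^2 * (1 + |Real.log δ₂|)) := add_le_add hreg2 hreg1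
    _ ≤ C^4 * (8 * δ₂^2 / η^4) * (K * δ₁^2 * |Real.log (δ₁ * δ₂)|)
        + C^4 * (8 * δ₁^2 / η^4) * (K * δ₂^2 * |Real.log (δ₁ * δ₂)|) := by
        gcongr
    _ = C^4 * 8 / η^4 * K * 2 * δ₁^2 * δ₂^2 * |Real.log (δ₁ * δ₂)| := by ring
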